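/- arXiv:1911.08632 — 2 statements merged into one kernel-verified Lean document; each statement's English description precedes it below -/
import Mathlib

section
/- For the path-counting flow domain (ℕ, +, 0) with edge functions {id, 0}: for a finite graph (N, e) whose nonzero edges form an acyclic relation, and any inflow in : N → ℕ, the flow equation has a unique solution, and flow(n) counts the number of distinct paths from nodes n0 (weighted by in(n0)) to n along nonzero edges. -/
def FlowEqn {ι : Type*} (N : Finset ι) (e : ι → ι → ℕ → ℕ) (inf flo : ι → ℕ) : Prop :=
  ∀ n ∈ N, flo n = inf n + ∑ n' ∈ N, e n' n (flo n')

/-- l is a path ending at n along identity-labelled edges inside N. -/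
def IsPathTo {ι : Type*} (N : Finset ι) (e : ι → ι → ℕ → ℕ) (n : ι)
    (l : List ι) : Prop :=
  l ≠ [] ∧ (∀ x ∈ l, x ∈ N) ∧ l.Chain' (fun a b => e a b = id) ∧
    l.getLast? = some n

lemma aux_chain'_imp_mem {α : Type*} {R S : α → α → Prop} :
    ∀ {l : List α}, l.Chain' R → (∀ a ∈ l, ∀ b ∈ l, R a b → S a b) → l.Chain' S
  | [], _, _ => List.isChain_nil
  | [_], _, _ => List.isChain_singleton _
  | a :: b :: l, h, hm => by
    rw [List.Chain', List.isChain_cons_cons] at h ⊢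
    exact ⟨hm a (by simp) b (by simp) h.1,
      aux_chain'_imp_mem h.2 (fun x hx y hy => hm x (by simp [hx]) y (by simp [hy]))⟩

lemma aux_chain'_nodup {α : Type*} {S : α → α → Prop} {l : List α}
    (h : l.Chain' S) (hc : ∀ x, ¬ Relation.TransGen S x x) : l.Nodup := by
  have hp : l.Pairwise (Relation.TransGen S) := by
    rw [← List.isChain_iff_pairwise]
    exact h.imp (fun a b hab => Relation.TransGen.single hab)
  exact hp.imp (fun {a b} htr => by rintro rfl; exact hc a htr)

lemma aux_paths_finite {ι : Type*} (N : Finset ι) (e : ι → ι → ℕ → ℕ)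
    (hacyc : ∀ n, ¬ Relation.TransGen
      (fun a b => a ∈ N ∧ b ∈ N ∧ e a b = id) n n) (n : ι) :
    {l : List ι | IsPathTo N e n l}.Finite := by
  have hfin : ({l : List ↥N | l.length ≤ N.card}.image (List.map Subtype.val)).Finite :=
    (List.finite_length_le ↥N N.card).image _
  apply hfin.subset
  rintro l ⟨hne, hmem, hch, hlast⟩
  have hch' : l.Chain' (fun a b => a ∈ N ∧ b ∈ N ∧ e a b = id) :=
    aux_chain'_imp_mem hch (fun a ha b hb hab => ⟨hmem a ha, hmem b hb, hab⟩)
  have hnd : l.Nodup := aux_chain'_nodup hch' hacyc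
  refine ⟨l.attachWith (· ∈ N) hmem, ?_, by simp⟩
  have : (l.attachWith (· ∈ N) hmem).map Subtype.val = l := by simp
  have hnd' : (l.attachWith (· ∈ N) hmem).Nodup := by
    refine List.Nodup.of_map Subtype.val ?_
    rw [this]; exact hnd
  simpa [Set.mem_setOf_eq] using hnd'.length_le_card

/-- decomposition of paths -/
lemma aux_decomp {ι : Type*} (N : Finset ι) (e : ι → ι → ℕ → ℕ) {n : ι} (hn : n ∈ N)
    (l : List ι) :
    IsPathTo N e n l ↔ l = [n] ∨
      ∃ n' ∈ N, e n' n = id ∧ ∃ l', IsPathTo N e n' l' ∧ l = l' ++ [n] := by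
  constructor
  · rintro ⟨hne, hmem, hch, hlast⟩
    have hdec : l.dropLast ++ [n] = l := List.dropLast_append_getLast? n hlast
    rcases eq_or_ne l.dropLast [] with h0 | h0
    · left; rw [← hdec, h0]; rfl
    · right
      set l' := l.dropLast with hl'
      have hn' : l'.getLast? = some (l'.getLast h0) := List.getLast?_eq_getLast h0
      set n' := l'.getLast h0 with hn'def
      have hsub : ∀ x ∈ l', x ∈ l := fun x hx => by
        rw [← hdec]; exact List.mem_append_left _ hx
      rw [← hdec] at hch
      rw [List.Chain', List.isChain_append] at hch
      have hedge : e n' n = id := hch.2.2 n' hn' n rfl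
      refine ⟨n', hmem n' (hsub n' (List.getLast_mem h0)), hedge, l', ⟨h0,
        fun x hx => hmem x (hsub x hx), hch.1, hn'⟩, hdec.symm⟩
  · rintro (rfl | ⟨n', hn', hedge, l', ⟨hne', hmem', hch', hlast'⟩, rfl⟩)
    · exact ⟨by simp, by simpa using hn, List.isChain_singleton n, rfl⟩
    · refine ⟨by simp, ?_, ?_, by simp⟩
      · intro x hx
        rcases List.mem_append.mp hx with h | h
        · exact hmem' x h
        · simpa using (List.mem_singleton.mp h) ▸ hn
      · rw [List.Chain', List.isChain_append]
        refine ⟨hch', List.isChain_singleton n, ?_⟩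
        intro x hx y hy
        rw [List.head?_cons, Option.mem_some_iff] at hy
        rw [hlast', Option.mem_some_iff] at hx
        subst hx; subst hy; exact hedge

/-- For the path-counting flow domain, if the nonzero (identity) edges form an
acyclic relation, then the flow equation has a unique solution, and the flow at n
counts the paths ending at n, each weighted by the inflow at its start node. -/
theorem stmt15 {ι : Type*} [DecidableEq ι] (N : Finset ι)
    (e : ι → ι → ℕ → ℕ)
    (he : ∀ a b, e a b = id ∨ e a b = fun _ => 0)
    (hacyc : ∀ n, ¬ Relation.TransGen
      (fun a b => a ∈ N ∧ b ∈ N ∧ e a b = id) n n)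
    (inf : ι → ℕ) :
    (∃ flo, FlowEqn N e inf flo) ∧
    (∀ flo flo', FlowEqn N e inf flo → FlowEqn N e inf flo' →
        ∀ n ∈ N, flo n = flo' n) ∧
    (∀ flo, FlowEqn N e inf flo → ∀ n ∈ N,
        ∃ hfin : {l : List ι | IsPathTo N e n l}.Finite,
          flo n = ∑ l ∈ hfin.toFinset, l.head?.elim 0 inf) := by
  classical
  have hfin : ∀ n, {l : List ι | IsPathTo N e n l}.Finite :=
    aux_paths_finite N e hacyc
  set P : ι → Finset (List ι) := fun n => (hfin n).toFinset with hP
  set w : List ι → ℕ := fun l => l.head?.elim 0 inf with hw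
  set flo₀ : ι → ℕ := fun n => ∑ l ∈ P n, w l with hflo₀def
  -- Finset decomposition
  have hPdec : ∀ n ∈ N, P n = insert [n]
      ((N.filter (fun n' => e n' n = id)).biUnion
        (fun n' => (P n').image (· ++ [n]))) := by
    intro n hn
    ext l
    simp only [hP, Set.Finite.mem_toFinset, Set.mem_setOf_eq, Finset.mem_insert,
      Finset.mem_biUnion, Finset.mem_filter, Finset.mem_image]
    rw [aux_decomp N e hn l]
    constructor
    · rintro (rfl | ⟨n', h1, h2, l', h3, rfl⟩)
      · exact Or.inl rfl
      · exact Or.inr ⟨n', ⟨h1, h2⟩, l', h3, rfl⟩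
    · rintro (rfl | ⟨n', ⟨h1, h2⟩, l', h3, rfl⟩)
      · exact Or.inl rfl
      · exact Or.inr ⟨n', h1, h2, l', h3, rfl⟩
  -- flo₀ satisfies the flow equation
  have hfe : FlowEqn N e inf flo₀ := by
    intro n hn
    have hnotmem : [n] ∉ (N.filter (fun n' => e n' n = id)).biUnion
        (fun n' => (P n').image (· ++ [n])) := by
      simp only [Finset.mem_biUnion, Finset.mem_image, not_exists, not_and]
      rintro n' _ l' hl' hcontra
      have : l' ≠ [] := ((hfin n').mem_toFinset.mp hl').1
      have := congrArg List.length hcontra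
      simp at this
      exact ‹l' ≠ []› this
    have hdisj : ∀ x ∈ N.filter (fun n' => e n' n = id),
        ∀ y ∈ N.filter (fun n' => e n' n = id), x ≠ y →
        Disjoint ((P x).image (· ++ [n])) ((P y).image (· ++ [n])) := by
      intro x _ y _ hxy
      rw [Finset.disjoint_left]
      rintro l hlx hly
      rcases Finset.mem_image.mp hlx with ⟨lx, hlx', rfl⟩
      rcases Finset.mem_image.mp hly with ⟨ly, hly', heq⟩
      have : ly = lx := List.append_left_injective [n] heq
      subst this
      have h1 := ((hfin x).mem_toFinset.mp hlx').2.2.2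
      have h2 := ((hfin y).mem_toFinset.mp hly').2.2.2
      rw [h1] at h2
      exact hxy (Option.some_injective _ h2)
    calc flo₀ n = ∑ l ∈ P n, w l := rfl
      _ = w [n] + ∑ n' ∈ N.filter (fun n' => e n' n = id),
            ∑ l ∈ (P n').image (· ++ [n]), w l := by
          rw [hPdec n hn, Finset.sum_insert hnotmem, Finset.sum_biUnion hdisj]
      _ = inf n + ∑ n' ∈ N.filter (fun n' => e n' n = id), flo₀ n' := by
          congr 1
          refine Finset.sum_congr rfl (fun n' _ => ?_)
          rw [Finset.sum_image (fun a _ b _ h => List.append_left_injective [n] h)]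
          refine Finset.sum_congr rfl (fun l hl => ?_)
          have hne : l ≠ [] := ((hfin n').mem_toFinset.mp hl).1
          simp only [hw]
          rw [List.head?_append_of_ne_nil _ hne]
      _ = inf n + ∑ n' ∈ N, e n' n (flo₀ n') := by
          congr 1
          rw [Finset.sum_filter]
          refine Finset.sum_congr rfl (fun n' _ => ?_)
          rcases he n' n with h | h
          · simp [h]
          · have hne : e n' n ≠ id := by
              rw [h]; intro hc; simpa using congrFun hc 1
            rw [if_neg hne, h]
  -- uniqueness via well-founded induction
  have huniq : ∀ flo flo', FlowEqn N e inf flo → FlowEqn N e inf flo' →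
      ∀ n ∈ N, flo n = flo' n := by
    intro flo flo' h h' n hn
    set R : ι → ι → Prop := fun a b => a ∈ N ∧ b ∈ N ∧ e a b = id with hR
    set r : ↥N → ↥N → Prop := fun a b => Relation.TransGen R a.1 b.1 with hr
    have : IsTrans ↥N r := ⟨fun _ _ _ hab hbc => hab.trans hbc⟩
    have : IsIrrefl ↥N r := ⟨fun a ha => hacyc a.1 ha⟩
    have hwf : WellFounded r := Finite.wellFounded_of_trans_of_irrefl r
    suffices h : ∀ m : ↥N, flo m.1 = flo' m.1 from h ⟨n, hn⟩
    intro m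
    induction m using hwf.induction with
    | _ m IH =>
      obtain ⟨a, ha⟩ := m
      rw [h a ha, h' a ha]
      congr 1
      refine Finset.sum_congr rfl (fun b hb => ?_)
      rcases he b a with hid | h0
      · rw [hid]
        exact IH ⟨b, hb⟩ (Relation.TransGen.single ⟨hb, ha, hid⟩)
      · rw [h0]
  refine ⟨⟨flo₀, hfe⟩, huniq, ?_⟩
  intro flo h n hn
  exact ⟨hfin n, huniq flo flo₀ h hfe n hn⟩
end

section
/- In the path-counting flow domain, there exists a finite graph and inflow for which the flow equation has no solution: a three-node graph with inflow 1 at node a and 0 elsewhere, edges a → b, b → c, and c → b (all labelled identity), admits no function flow : {a,b,c} → ℕ satisfying the flow equation. -/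
/-- The edges a → b, b → c, c → b (identity functions), all others absent. -/
def e16 : Fin 3 → Fin 3 → ℕ → ℕ := fun a b =>
  if (a = 0 ∧ b = 1) ∨ (a = 1 ∧ b = 2) ∨ (a = 2 ∧ b = 1) then id else fun _ => 0

/-- In the path-counting flow domain, the flow equation can have no solution. -/
theorem stmt16 :
    ¬ ∃ flo : Fin 3 → ℕ,
        FlowEqn Finset.univ e16 (fun n => if n = 0 then 1 else 0) flo := by
  rintro ⟨flo, h⟩
  have h0 := h 0 (Finset.mem_univ _)
  have h1 := h 1 (Finset.mem_univ _)
  have h2 := h 2 (Finset.mem_univ _)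
  simp [Fin.sum_univ_three, e16] at h0 h1 h2
  omega
end
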